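/- Let f^a_n(X,Y,Z) = ⋁_{i=1}^n (⋀_{j=1}^{i-1} ¬Y_j) ∧ Y_i ∧ X_i (a function over 2n+1 variables in which Z does not occur). Then the set of 2n+1 elements consisting of, for each i, the pairs ((⋀_{j<i} ¬Y_j) ∧ Y_i ∧ X_i, ⊤) and ((⋀_{j<i} ¬Y_j) ∧ Y_i ∧ ¬X_i, ⊥), together with (⋀_{j=1}^{n} ¬Y_j, ⊥), forms an (XY,Z)-partition of f^a_n: the 2n+1 primes are consistent, pairwise mutually exclusive, and exhaustive, and the disjunction of prime-sub conjunctions equals f^a_n. -/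

import Mathlib

/-- An (X,Y)-partition of a Boolean function `f`, where `σ` is the type of
assignments to the X-variables and `τ` the type of assignments to the
Y-variables: a finite set of prime-sub pairs whose primes are consistent,
pairwise mutually exclusive and exhaustive, and whose disjunction of
prime-sub conjunctions equals `f`. -/
def IsXYPartition {σ τ : Type} (P : Finset ((σ → Bool) × (τ → Bool)))
    (f : σ → τ → Bool) : Prop :=
  (∀ e ∈ P, ∃ x, e.1 x = true) ∧
  (∀ e ∈ P, ∀ e' ∈ P, e ≠ e' → ∀ x, ¬(e.1 x = true ∧ e'.1 x = true)) ∧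
  (∀ x, ∃ e ∈ P, e.1 x = true) ∧
  (∀ x y, f x y = true ↔ ∃ e ∈ P, e.1 x = true ∧ e.2 y = true)

/-- A partition is compressed if distinct elements have distinct subs. -/
def IsCompressed {σ τ : Type} (P : Finset ((σ → Bool) × (τ → Bool))) : Prop :=
  ∀ e ∈ P, ∀ e' ∈ P, e.2 = e'.2 → e = e'
/-- `fb n x y = ⋁ i, (⋀ j < i, ¬ y j) ∧ y i ∧ x i`. -/
def fb (n : ℕ) (x y : Fin n → Bool) : Bool :=
  decide (∃ i : Fin n, (∀ j, j < i → y j = false) ∧ y i = true ∧ x i = true)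

/-- `fa n` over XY-assignments and the single variable Z (which does not occur). -/
def fa (n : ℕ) (xy : (Fin n → Bool) × (Fin n → Bool)) (_z : Bool) : Bool :=
  fb n xy.1 xy.2


namespace Stmt6Aux

variable {n : ℕ}

def plus (n : ℕ) (i : Fin n) : (((Fin n → Bool) × (Fin n → Bool)) → Bool) × (Bool → Bool) :=
  ((fun xy => decide ((∀ j, j < i → xy.2 j = false) ∧ xy.2 i = true ∧ xy.1 i = true)),
   (fun _ => true))

def minus (n : ℕ) (i : Fin n) : (((Fin n → Bool) × (Fin n → Bool)) → Bool) × (Bool → Bool) :=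
  ((fun xy => decide ((∀ j, j < i → xy.2 j = false) ∧ xy.2 i = true ∧ xy.1 i = false)),
   (fun _ => false))

def q (n : ℕ) : (((Fin n → Bool) × (Fin n → Bool)) → Bool) × (Bool → Bool) :=
  ((fun xy => decide (∀ j, xy.2 j = false)), (fun _ => false))

def Pset (n : ℕ) : Finset ((((Fin n → Bool) × (Fin n → Bool)) → Bool) × (Bool → Bool)) :=
  ((Finset.univ : Finset (Fin n)).image (plus n)) ∪
  ((Finset.univ : Finset (Fin n)).image (minus n)) ∪ {q n}

lemma mem_Pset {e} : e ∈ Pset n ↔ (∃ i, e = plus n i) ∨ (∃ i, e = minus n i) ∨ e = q n := by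
  simp [Pset, Finset.mem_union, Finset.mem_image, eq_comm, or_assoc]
  tauto

lemma lead_unique {y : Fin n → Bool} {i i' : Fin n}
    (h : (∀ j, j < i → y j = false) ∧ y i = true)
    (h' : (∀ j, j < i' → y j = false) ∧ y i' = true) : i = i' := by
  rcases lt_trichotomy i i' with hlt | he | hlt
  · exact absurd (h'.1 i hlt) (by simp [h.2])
  · exact he
  · exact absurd (h.1 i' hlt) (by simp [h'.2])

lemma exhaust (y : Fin n → Bool) :
    (∀ j, y j = false) ∨ ∃ i, (∀ j, j < i → y j = false) ∧ y i = true := by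
  by_cases h : ∀ j, y j = false
  · exact Or.inl h
  · right
    push_neg at h
    obtain ⟨j, hj⟩ := h
    have hex : ∃ k : ℕ, ∃ hk : k < n, y ⟨k, hk⟩ = true :=
      ⟨j, j.2, by simpa [Bool.not_eq_false] using hj⟩
    classical
    obtain ⟨hk, hyk⟩ := Nat.find_spec hex
    refine ⟨⟨Nat.find hex, hk⟩, ?_, hyk⟩
    intro j' hj'
    by_contra hc
    have hyj' : y j' = true := by simpa [Bool.not_eq_false] using hc
    exact Nat.find_min hex (show (j' : ℕ) < Nat.find hex from hj')
      ⟨j'.2, by simpa using hyj'⟩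

def wit (i : Fin n) (b : Bool) : (Fin n → Bool) × (Fin n → Bool) :=
  ((fun _ => b), (fun j => decide (j = i)))

lemma plus_wit (i i' : Fin n) : (plus n i').1 (wit i true) = decide (i' = i) := by
  simp only [plus, wit]
  apply decide_eq_decide.mpr
  constructor
  · rintro ⟨-, h2, -⟩; simpa using h2
  · rintro rfl
    exact ⟨fun j hj => decide_eq_false (by rintro rfl; exact lt_irrefl _ hj), by simp, trivial⟩

lemma minus_wit (i i' : Fin n) : (minus n i').1 (wit i false) = decide (i' = i) := by
  simp only [minus, wit]
  apply decide_eq_decide.mpr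
  constructor
  · rintro ⟨-, h2, -⟩; simpa using h2
  · rintro rfl
    exact ⟨fun j hj => decide_eq_false (by rintro rfl; exact lt_irrefl _ hj), by simp, trivial⟩

lemma plus_inj : Function.Injective (plus n) := by
  intro i i' h
  have := congrFun (congrArg Prod.fst h) (wit i' true)
  rw [plus_wit, plus_wit] at this
  simpa using this

lemma minus_inj : Function.Injective (minus n) := by
  intro i i' h
  have := congrFun (congrArg Prod.fst h) (wit i' false)
  rw [minus_wit, minus_wit] at this
  simpa using this

lemma plus_ne_minus (i i' : Fin n) : plus n i ≠ minus n i' := by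
  intro h
  have := congrFun (congrArg Prod.snd h) true
  simp [plus, minus] at this

lemma plus_ne_q (i : Fin n) : plus n i ≠ q n := by
  intro h
  have := congrFun (congrArg Prod.snd h) true
  simp [plus, q] at this

lemma q_wit (i : Fin n) (b : Bool) : (q n).1 (wit i b) = false := by
  simp only [q, wit]
  apply decide_eq_false
  intro hall
  simpa using hall i

lemma minus_ne_q (i : Fin n) : minus n i ≠ q n := by
  intro h
  have := congrFun (congrArg Prod.fst h) (wit i false)
  rw [minus_wit, q_wit] at this
  simpa using this

end Stmt6Aux
theorem stmt6 (n : ℕ) :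
    IsXYPartition
      (((Finset.univ : Finset (Fin n)).image (fun i =>
          ((fun xy : (Fin n → Bool) × (Fin n → Bool) =>
              decide ((∀ j, j < i → xy.2 j = false) ∧ xy.2 i = true ∧ xy.1 i = true)),
            (fun _ : Bool => true)))) ∪
        ((Finset.univ : Finset (Fin n)).image (fun i =>
          ((fun xy : (Fin n → Bool) × (Fin n → Bool) =>
              decide ((∀ j, j < i → xy.2 j = false) ∧ xy.2 i = true ∧ xy.1 i = false)),
            (fun _ : Bool => false)))) ∪
        {((fun xy : (Fin n → Bool) × (Fin n → Bool) => decide (∀ j, xy.2 j = false)),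
          (fun _ : Bool => false))})
      (fa n) ∧
    (((Finset.univ : Finset (Fin n)).image (fun i =>
          ((fun xy : (Fin n → Bool) × (Fin n → Bool) =>
              decide ((∀ j, j < i → xy.2 j = false) ∧ xy.2 i = true ∧ xy.1 i = true)),
            (fun _ : Bool => true)))) ∪
        ((Finset.univ : Finset (Fin n)).image (fun i =>
          ((fun xy : (Fin n → Bool) × (Fin n → Bool) =>
              decide ((∀ j, j < i → xy.2 j = false) ∧ xy.2 i = true ∧ xy.1 i = false)),
            (fun _ : Bool => false)))) ∪
        {((fun xy : (Fin n → Bool) × (Fin n → Bool) => decide (∀ j, xy.2 j = false)),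
          (fun _ : Bool => false))}).card = 2 * n + 1 := by
  show IsXYPartition (Stmt6Aux.Pset n) (fa n) ∧ (Stmt6Aux.Pset n).card = 2 * n + 1
  open Stmt6Aux in
  constructor
  · refine ⟨?_, ?_, ?_, ?_⟩
    · -- consistency
      intro e he
      rcases mem_Pset.mp he with ⟨i, rfl⟩ | ⟨i, rfl⟩ | rfl
      · exact ⟨wit i true, by rw [plus_wit]; simp⟩
      · exact ⟨wit i false, by rw [minus_wit]; simp⟩
      · exact ⟨((fun _ => false), (fun _ => false)), by simp [q]⟩
    · -- mutual exclusion
      intro e he e' he' hne x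
      rintro ⟨h1, h2⟩
      rcases mem_Pset.mp he with ⟨i, rfl⟩ | ⟨i, rfl⟩ | rfl <;>
        rcases mem_Pset.mp he' with ⟨i', rfl⟩ | ⟨i', rfl⟩ | rfl <;>
          simp only [plus, minus, q, decide_eq_true_eq] at h1 h2
      · obtain rfl := lead_unique ⟨h1.1, h1.2.1⟩ ⟨h2.1, h2.2.1⟩; exact hne rfl
      · obtain rfl := lead_unique ⟨h1.1, h1.2.1⟩ ⟨h2.1, h2.2.1⟩
        rw [h1.2.2] at h2; exact Bool.true_eq_false.mp h2.2.2
      · rw [h2 i] at h1; exact Bool.false_eq_true.mp h1.2.1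
      · obtain rfl := lead_unique ⟨h1.1, h1.2.1⟩ ⟨h2.1, h2.2.1⟩
        rw [h1.2.2] at h2; exact Bool.false_eq_true.mp h2.2.2
      · obtain rfl := lead_unique ⟨h1.1, h1.2.1⟩ ⟨h2.1, h2.2.1⟩; exact hne rfl
      · rw [h2 i] at h1; exact Bool.false_eq_true.mp h1.2.1
      · rw [h1 i'] at h2; exact Bool.false_eq_true.mp h2.2.1
      · rw [h1 i'] at h2; exact Bool.false_eq_true.mp h2.2.1
      · exact hne rfl
    · -- exhaustive
      intro x
      rcases exhaust x.2 with h | ⟨i, h1, h2⟩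
      · exact ⟨q n, mem_Pset.mpr (Or.inr (Or.inr rfl)), by simpa [q] using h⟩
      · cases hx : x.1 i with
        | true =>
            exact ⟨plus n i, mem_Pset.mpr (Or.inl ⟨i, rfl⟩),
              by simp only [plus, decide_eq_true_eq]; exact ⟨h1, h2, hx⟩⟩
        | false =>
            exact ⟨minus n i, mem_Pset.mpr (Or.inr (Or.inl ⟨i, rfl⟩)),
              by simp only [minus, decide_eq_true_eq]; exact ⟨h1, h2, hx⟩⟩
    · -- function agreement
      intro x y
      constructor
      · intro hf
        obtain ⟨i, h1, h2, h3⟩ := of_decide_eq_true (by simpa [fa, fb] using hf)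
        exact ⟨plus n i, mem_Pset.mpr (Or.inl ⟨i, rfl⟩),
          by simp only [plus, decide_eq_true_eq]; exact ⟨h1, h2, h3⟩, rfl⟩
      · rintro ⟨e, he, h1, h2⟩
        rcases mem_Pset.mp he with ⟨i, rfl⟩ | ⟨i, rfl⟩ | rfl
        · simp only [plus, decide_eq_true_eq] at h1
          simp only [fa, fb, decide_eq_true_eq]
          exact ⟨i, h1⟩
        · exact absurd h2 (by simp [minus])
        · exact absurd h2 (by simp [q])
  · -- cardinality
    have hdisj1 : Disjoint ((Finset.univ : Finset (Fin n)).image (plus n))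
        ((Finset.univ : Finset (Fin n)).image (minus n)) := by
      simp only [Finset.disjoint_left, Finset.mem_image]
      rintro e ⟨i, -, rfl⟩ ⟨i', -, h⟩
      exact plus_ne_minus i i' h.symm
    have hdisj2 : Disjoint
        (((Finset.univ : Finset (Fin n)).image (plus n)) ∪
          ((Finset.univ : Finset (Fin n)).image (minus n)))
        ({q n} : Finset _) := by
      simp only [Finset.disjoint_right, Finset.mem_singleton, Finset.mem_union,
        Finset.mem_image]
      rintro e rfl (⟨i, -, h⟩ | ⟨i, -, h⟩)
      · exact plus_ne_q i h
      · exact minus_ne_q i h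
    rw [Pset, Finset.card_union_of_disjoint hdisj2, Finset.card_union_of_disjoint hdisj1,
      Finset.card_image_of_injective _ plus_inj, Finset.card_image_of_injective _ minus_inj,
      Finset.card_singleton, Finset.card_univ, Fintype.card_fin]
    ring
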